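/- arXiv:2511.02083 — 4 statements merged into one kernel-verified Lean document; each statement's English description precedes it below -/
import Mathlib

section
/- For every y₀ ∈ Fin n, the probability that ln(R_{y₀})/p_{y₀} ≥ ln(R_z)/p_z holds simultaneously for all z ≠ y₀ equals p_{y₀}. (Gumbel-max trick: the watermarked sampling rule selects token y₀ with exactly its model probability, hence is distribution-preserving.) -/
open MeasureTheory Set

lemma gumbel_aux_measure (a b : ℝ) (ha : 0 < a) (hb : 0 < b) {t : ℝ}
    (ht : t ∈ Set.Ioc (0:ℝ) 1) :
    (volume.restrict (Set.Icc (0:ℝ) 1)) {x | Real.log x / a ≤ Real.log t / b}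
      = ENNReal.ofReal (t ^ (a / b)) := by
  set s := t ^ (a / b) with hs
  have hs0 : 0 < s := Real.rpow_pos_of_pos ht.1 _
  have hs1 : s ≤ 1 := Real.rpow_le_one ht.1.le ht.2 (by positivity)
  have hlogs : Real.log s = (a / b) * Real.log t := Real.log_rpow ht.1 _
  have hkey : Real.log s / a = Real.log t / b := by
    rw [hlogs]; field_simp
  have hmeasS : MeasurableSet {x : ℝ | Real.log x / a ≤ Real.log t / b} :=
    measurableSet_le (Real.measurable_log.div_const a) measurable_const
  rw [Measure.restrict_apply hmeasS]
  have h2 : Set.Ioc 0 s ⊆ {x | Real.log x / a ≤ Real.log t / b} ∩ Set.Icc 0 1 := by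
    intro x hx
    refine ⟨?_, ⟨hx.1.le, hx.2.trans hs1⟩⟩
    have hlx : Real.log x ≤ Real.log s := Real.log_le_log hx.1 hx.2
    rw [Set.mem_setOf_eq, ← hkey]
    exact div_le_div_of_nonneg_right hlx ha.le
  have h1 : {x | Real.log x / a ≤ Real.log t / b} ∩ Set.Icc 0 1 ⊆ Set.Ioc 0 s ∪ {0} := by
    rintro x ⟨hxS, hx0, hx1⟩
    rcases eq_or_lt_of_le hx0 with h0 | h0
    · right; simp [← h0]
    · left
      refine ⟨h0, ?_⟩
      have : Real.log x ≤ Real.log s := by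
        rw [Set.mem_setOf_eq, ← hkey] at hxS
        exact (div_le_div_iff_of_pos_right ha).1 hxS
      exact (Real.log_le_log_iff h0 hs0).1 this
  refine le_antisymm ?_ ?_
  · refine (measure_mono h1).trans ?_
    refine (measure_union_le _ _).trans ?_
    rw [measure_singleton, add_zero, Real.volume_Ioc, sub_zero]
  · refine le_trans (le_of_eq ?_) (measure_mono h2)
    rw [Real.volume_Ioc, sub_zero]

open ProbabilityTheory

/-- **Gumbel-max trick (distribution preservation).**
Let `R y`, `y : Fin n`, be independent random variables, each uniform on `[0,1]`,
and let `p` be a probability vector with strictly positive entries. Then for every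
token `y₀`, the probability that `log (R y₀) / p y₀ ≥ log (R z) / p z` holds
simultaneously for all `z ≠ y₀` is exactly `p y₀`. -/
theorem gumbel_max_selects_with_model_probability
    {Ω : Type*} [MeasureSpace Ω] [IsProbabilityMeasure (ℙ : Measure Ω)]
    {n : ℕ} (R : Fin n → Ω → ℝ) (hmeas : ∀ y, Measurable (R y))
    (hindep : iIndepFun (m := fun _ => Real.measurableSpace) R ℙ)
    (hunif : ∀ y, (ℙ : Measure Ω).map (R y) = volume.restrict (Set.Icc (0:ℝ) 1))
    (p : Fin n → ℝ) (hp : ∀ y, 0 < p y) (hsum : ∑ y, p y = 1)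
    (y₀ : Fin n) :
    ℙ {ω | ∀ z, z ≠ y₀ → Real.log (R z ω) / p z ≤ Real.log (R y₀ ω) / p y₀}
      = ENNReal.ofReal (p y₀) := by
  classical
  set μ : Measure ℝ := volume.restrict (Set.Icc (0:ℝ) 1) with hμdef
  haveI hprob : IsProbabilityMeasure μ := ⟨by simp [hμdef, Real.volume_Icc]⟩
  have hp0 : 0 < p y₀ := hp y₀
  have hple : p y₀ ≤ 1 := by
    rw [← hsum]
    exact Finset.single_le_sum (fun i _ => (hp i).le) (Finset.mem_univ y₀)
  -- joint law is the product of uniforms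
  have hRmeas : Measurable (fun ω => fun i => R i ω) := measurable_pi_iff.2 hmeas
  have hmap : (ℙ : Measure Ω).map (fun ω => fun i => R i ω)
      = Measure.pi (fun _ : Fin n => μ) := by
    refine (Measure.pi_eq fun s hs => ?_).symm
    rw [Measure.map_apply hRmeas (MeasurableSet.univ_pi hs)]
    have heq : (fun ω => fun i => R i ω) ⁻¹' Set.pi Set.univ s
        = ⋂ i ∈ Finset.univ, R i ⁻¹' s i := by
      ext ω; simp [Set.mem_pi]
    rw [heq, hindep.measure_inter_preimage_eq_mul Finset.univ (fun i _ => hs i)]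
    refine Finset.prod_congr rfl fun i _ => ?_
    rw [← Measure.map_apply (hmeas i) (hs i), hunif i]
  -- the event, as a set in the product space
  set A : Set (Fin n → ℝ) :=
    {x | ∀ z, z ≠ y₀ → Real.log (x z) / p z ≤ Real.log (x y₀) / p y₀} with hAdef
  have hAmeas : MeasurableSet A := by
    have hA2 : A = ⋂ z, ⋂ _ : z ≠ y₀,
        {x : Fin n → ℝ | Real.log (x z) / p z ≤ Real.log (x y₀) / p y₀} := by
      ext x; simp [hAdef]
    rw [hA2]
    exact MeasurableSet.iInter fun z => MeasurableSet.iInter fun _ =>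
      measurableSet_le ((Real.measurable_log.comp (measurable_pi_apply z)).div_const _)
        ((Real.measurable_log.comp (measurable_pi_apply y₀)).div_const _)
  have hstep1 : ℙ {ω | ∀ z, z ≠ y₀ → Real.log (R z ω) / p z ≤ Real.log (R y₀ ω) / p y₀}
      = Measure.pi (fun _ : Fin n => μ) A := by
    rw [← hmap, Measure.map_apply hRmeas hAmeas]
    rfl
  rw [hstep1]
  -- split off coordinate y₀
  letI hU : Unique {i : Fin n // i = y₀} := ⟨⟨⟨y₀, rfl⟩⟩, fun a => Subtype.ext a.2⟩
  set B : Set (({i : Fin n // i = y₀} → ℝ) × ({i : Fin n // ¬ i = y₀} → ℝ)) :=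
    {q | ∀ z : {i : Fin n // ¬ i = y₀},
      Real.log (q.2 z) / p z ≤ Real.log (q.1 ⟨y₀, rfl⟩) / p y₀} with hBdef
  have hBmeas : MeasurableSet B := by
    have hB2 : B = ⋂ z : {i : Fin n // ¬ i = y₀},
        {q : ({i : Fin n // i = y₀} → ℝ) × ({i : Fin n // ¬ i = y₀} → ℝ) |
          Real.log (q.2 z) / p z ≤ Real.log (q.1 ⟨y₀, rfl⟩) / p y₀} := by
      ext q; simp [hBdef]
    rw [hB2]
    exact MeasurableSet.iInter fun z =>
      measurableSet_le
        ((Real.measurable_log.comp ((measurable_pi_apply z).comp measurable_snd)).div_const _)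
        ((Real.measurable_log.comp
          ((measurable_pi_apply (⟨y₀, rfl⟩ : {i : Fin n // i = y₀})).comp measurable_fst)).div_const _)
  set e := MeasurableEquiv.piEquivPiSubtypeProd (fun _ : Fin n => ℝ) (fun i => i = y₀)
    with hedef
  have hAB : A = e ⁻¹' B := by
    ext x
    simp only [hAdef, hBdef, hedef, Set.mem_preimage, Set.mem_setOf_eq,
      MeasurableEquiv.piEquivPiSubtypeProd, MeasurableEquiv.coe_mk,
      Equiv.piEquivPiSubtypeProd]
    constructor
    · intro h z; exact h z z.2
    · intro h z hz; exact h ⟨z, hz⟩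
  have hsplit := measurePreserving_piEquivPiSubtypeProd (fun _ : Fin n => μ)
    (fun i => i = y₀)
  rw [hAB, hsplit.measure_preimage hBmeas.nullMeasurableSet]
  rw [Measure.prod_apply hBmeas]
  have hinner : ∀ a : {i : Fin n // i = y₀} → ℝ,
      (Measure.pi fun _ : {i : Fin n // ¬ i = y₀} => μ) (Prod.mk a ⁻¹' B)
        = ∏ z : {i : Fin n // ¬ i = y₀},
            μ {x | Real.log x / p z ≤ Real.log (a ⟨y₀, rfl⟩) / p y₀} := by
    intro a
    have hrect : Prod.mk a ⁻¹' B = Set.pi Set.univ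
        (fun z : {i : Fin n // ¬ i = y₀} =>
          {x | Real.log x / p z ≤ Real.log (a ⟨y₀, rfl⟩) / p y₀}) := by
      ext b; simp [hBdef, Set.mem_pi]
    rw [hrect, Measure.pi_pi]
  simp_rw [hinner]
  -- integrate out the unique coordinate
  have hfu := measurePreserving_funUnique μ {i : Fin n // i = y₀}
  have hcomp := hfu.lintegral_comp_emb
    (MeasurableEquiv.funUnique {i : Fin n // i = y₀} ℝ).measurableEmbedding
    (fun t => ∏ z : {i : Fin n // ¬ i = y₀},
      μ {x | Real.log x / p z ≤ Real.log t / p y₀})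
  have hfinal : (∫⁻ t : ℝ, (∏ z : {i : Fin n // ¬ i = y₀},
      μ {x | Real.log x / p z ≤ Real.log t / p y₀}) ∂μ) = ENNReal.ofReal (p y₀) := ?_
  · refine Eq.trans ?_ hfinal
    refine Eq.trans ?_ hcomp
    congr 1
    congr 1
    exact Subsingleton.elim _ _
  -- compute the sum of the remaining probabilities
  set r : ℝ := (1 - p y₀) / p y₀ with hrdef
  have hr0 : 0 ≤ r := div_nonneg (by linarith) hp0.le
  have hr1 : (-1 : ℝ) < r := by linarith
  have hsumsub : ∑ z : {i : Fin n // ¬ i = y₀}, p z = 1 - p y₀ := by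
    have h1 : ∑ z : {i : Fin n // ¬ i = y₀}, p z
        = ∑ i ∈ Finset.univ.filter (fun i => ¬ i = y₀), p i :=
      (Finset.sum_subtype _ (by simp) _).symm
    rw [h1]
    have h2 : Finset.univ.filter (fun i => ¬ i = y₀) = Finset.univ.erase y₀ := by
      ext i; simp [Finset.mem_erase, and_comm]
    rw [h2, eq_sub_iff_add_eq, Finset.sum_erase_add _ _ (Finset.mem_univ y₀), hsum]
  have hF : ∀ t ∈ Set.Ioc (0:ℝ) 1,
      (∏ z : {i : Fin n // ¬ i = y₀}, μ {x | Real.log x / p z ≤ Real.log t / p y₀})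
        = ENNReal.ofReal (t ^ r) := by
    intro t ht
    have heach : ∀ z : {i : Fin n // ¬ i = y₀},
        μ {x | Real.log x / p z ≤ Real.log t / p y₀}
          = ENNReal.ofReal (t ^ (p z / p y₀)) :=
      fun z => gumbel_aux_measure _ _ (hp z) hp0 ht
    rw [Finset.prod_congr rfl (fun z _ => heach z),
      ← ENNReal.ofReal_prod_of_nonneg (fun z _ => Real.rpow_nonneg ht.1.le _),
      ← Real.rpow_sum_of_pos ht.1, ← Finset.sum_div, hsumsub]
  have hμIoc : μ = volume.restrict (Set.Ioc (0:ℝ) 1) := by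
    rw [hμdef, Measure.restrict_congr_set Ioc_ae_eq_Icc]
  rw [hμIoc] at hF
  rw [hμIoc, setLIntegral_congr_fun measurableSet_Ioc hF]
  have hint : Integrable (fun t : ℝ => t ^ r) (volume.restrict (Set.Ioc (0:ℝ) 1)) := by
    rw [← IntegrableOn, ← intervalIntegrable_iff_integrableOn_Ioc_of_le zero_le_one]
    exact intervalIntegral.intervalIntegrable_rpow' hr1
  have hnn : 0 ≤ᵐ[volume.restrict (Set.Ioc (0:ℝ) 1)] fun t : ℝ => t ^ r := by
    filter_upwards [self_mem_ae_restrict measurableSet_Ioc] with t ht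
    exact Real.rpow_nonneg ht.1.le _
  rw [← ofReal_integral_eq_lintegral_ofReal hint hnn]
  congr 1
  rw [← intervalIntegral.integral_of_le zero_le_one, integral_rpow (Or.inl hr1),
    Real.one_rpow, Real.zero_rpow (by linarith), hrdef]
  field_simp
  ring
end

section
/- For every y₀ ∈ Fin n, the probability that the (almost surely unique) argmax of y ↦ ln(R_y)/p_y equals y₀ is exactly p_{y₀}. -/
open MeasureTheory ProbabilityTheory

/-- For every `y₀ : Fin n`, the probability that the (almost surely unique) argmax of
`y ↦ log (R y) / p y` equals `y₀` is exactly `p y₀`.  (We express "the argmax equals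
`y₀`" as: `y₀`'s score is strictly larger than the score of every other token.) -/
theorem gumbel_max_argmax_distribution
    {Ω : Type*} [MeasureSpace Ω] [IsProbabilityMeasure (ℙ : Measure Ω)]
    {n : ℕ} (R : Fin n → Ω → ℝ) (hmeas : ∀ y, Measurable (R y))
    (hindep : iIndepFun R ℙ)
    (hunif : ∀ y, (ℙ : Measure Ω).map (R y) = volume.restrict (Set.Icc (0:ℝ) 1))
    (p : Fin n → ℝ) (hp : ∀ y, 0 < p y) (hsum : ∑ y, p y = 1)
    (y₀ : Fin n) :
    ℙ {ω | ∀ z, z ≠ y₀ → Real.log (R z ω) / p z < Real.log (R y₀ ω) / p y₀}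
      = ENNReal.ofReal (p y₀) := by
  obtain ⟨m, rfl⟩ : ∃ m, n = m + 1 := ⟨n - 1, (Nat.succ_pred_eq_of_pos y₀.pos).symm⟩
  set ν : Measure ℝ := volume.restrict (Set.Icc (0:ℝ) 1) with hν
  haveI : IsFiniteMeasure ν := by
    constructor
    rw [hν, Measure.restrict_apply MeasurableSet.univ, Set.univ_inter, Real.volume_Icc]
    simp
  have hp1 : p y₀ ≤ 1 := hsum ▸ Finset.single_le_sum (fun i _ => (hp i).le) (Finset.mem_univ y₀)
  set a : ℝ := (1 - p y₀) / p y₀ with ha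
  have ha0 : 0 ≤ a := div_nonneg (by linarith) (hp y₀).le
  -- the joint law is the product of uniforms
  have hjm : Measurable (fun ω (y : Fin (m+1)) => R y ω) := measurable_pi_lambda _ hmeas
  have hmap : Measure.map (fun ω y => R y ω) ℙ = Measure.pi (fun _ : Fin (m+1) => ν) := by
    refine (Measure.pi_eq fun s hs => ?_).symm
    rw [Measure.map_apply hjm (MeasurableSet.univ_pi hs)]
    have hpre : (fun ω y => R y ω) ⁻¹' (Set.pi Set.univ s) = ⋂ y ∈ Finset.univ, R y ⁻¹' s y := by
      ext ω; simp [Set.mem_pi]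
    rw [hpre, hindep.measure_inter_preimage_eq_mul Finset.univ (fun i _ => hs i)]
    exact Finset.prod_congr rfl fun y _ => by
      rw [← Measure.map_apply (hmeas y) (hs y), hunif y]
  -- the event as a preimage of a measurable set in product space
  set S : Set (Fin (m+1) → ℝ) :=
    {u | ∀ z, z ≠ y₀ → Real.log (u z) / p z < Real.log (u y₀) / p y₀} with hSdef
  have hS : MeasurableSet S := by
    have : S = ⋂ z, ⋂ (_ : z ≠ y₀),
        {u : Fin (m+1) → ℝ | Real.log (u z) / p z < Real.log (u y₀) / p y₀} := by
      ext u; simp [hSdef]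
    rw [this]
    exact MeasurableSet.iInter fun z => MeasurableSet.iInter fun _ =>
      measurableSet_lt ((Real.measurable_log.comp (measurable_pi_apply z)).div_const _)
        ((Real.measurable_log.comp (measurable_pi_apply y₀)).div_const _)
  have hev : {ω | ∀ z, z ≠ y₀ → Real.log (R z ω) / p z < Real.log (R y₀ ω) / p y₀}
      = (fun ω y => R y ω) ⁻¹' S := rfl
  rw [hev, ← Measure.map_apply hjm hS, hmap]
  -- split off coordinate y₀
  set T : Set (ℝ × (Fin m → ℝ)) :=
    {q | ∀ j, Real.log (q.2 j) / p (y₀.succAbove j) < Real.log q.1 / p y₀} with hTdef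
  have hTm : MeasurableSet T := by
    have : T = ⋂ j, {q : ℝ × (Fin m → ℝ) |
        Real.log (q.2 j) / p (y₀.succAbove j) < Real.log q.1 / p y₀} := by
      ext q; simp [hTdef]
    rw [this]
    exact MeasurableSet.iInter fun j => measurableSet_lt
      ((Real.measurable_log.comp ((measurable_pi_apply j).comp measurable_snd)).div_const _)
      ((Real.measurable_log.comp measurable_fst).div_const _)
  have hMP := measurePreserving_piFinSuccAbove (fun _ : Fin (m+1) => ν) y₀
  have hpre2 : S = (MeasurableEquiv.piFinSuccAbove (fun _ : Fin (m+1) => ℝ) y₀) ⁻¹' T := by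
    ext u
    simp only [hSdef, Set.mem_setOf_eq, Set.mem_preimage, hTdef,
      MeasurableEquiv.piFinSuccAbove_apply]
    constructor
    · intro h j
      exact h _ (Fin.succAbove_ne y₀ j)
    · intro h z hz
      obtain ⟨j, rfl⟩ := Fin.exists_succAbove_eq hz
      exact h j
  rw [hpre2, hMP.measure_preimage hTm.nullMeasurableSet, Measure.prod_apply hTm]
  have hinner : ∀ x : ℝ, (Measure.pi (fun _ : Fin m => ν)) (Prod.mk x ⁻¹' T)
      = ∏ j : Fin m, ν {t : ℝ | Real.log t / p (y₀.succAbove j) < Real.log x / p y₀} := by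
    intro x
    have : Prod.mk x ⁻¹' T = Set.pi Set.univ
        (fun j => {t : ℝ | Real.log t / p (y₀.succAbove j) < Real.log x / p y₀}) := by
      ext v; simp [hTdef, Set.mem_pi]
    rw [this, Measure.pi_pi]
  simp_rw [hinner]
  rw [hν]
  rw [setLIntegral_congr (Ioo_ae_eq_Icc (α := ℝ) (a := 0) (b := 1)).symm]
  rw [setLIntegral_congr_fun measurableSet_Ioo (g := fun x => ENNReal.ofReal (x ^ a)) ?_]
  · -- final integral computation
    have hInt : IntegrableOn (fun x : ℝ => x ^ a) (Set.Ioo 0 1) := by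
      have h1 : IntervalIntegrable (fun x : ℝ => x ^ a) volume 0 1 :=
        intervalIntegral.intervalIntegrable_rpow' (by linarith)
      rwa [intervalIntegrable_iff_integrableOn_Ioo_of_le zero_le_one] at h1
    rw [← ofReal_integral_eq_lintegral_ofReal hInt
      ((ae_restrict_iff' measurableSet_Ioo).2 (ae_of_all _ fun x hx =>
        Real.rpow_nonneg hx.1.le a))]
    congr 1
    have h2 : ∫ x in Set.Ioo (0:ℝ) 1, x ^ a = ∫ x in (0:ℝ)..1, x ^ a := by
      rw [intervalIntegral.integral_of_le zero_le_one, integral_Ioc_eq_integral_Ioo]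
    rw [h2, integral_rpow (Or.inl (by linarith))]
    have h3 : a + 1 = 1 / p y₀ := by rw [ha]; field_simp [(hp y₀).ne']; ring
    rw [Real.one_rpow, Real.zero_rpow (by linarith), sub_zero, h3, one_div_one_div]
  · -- pointwise identification of the integrand on (0,1)
    intro x hx
    have hx0 : (0:ℝ) < x := hx.1
    have hx1 : x < 1 := hx.2
    have hlogx : Real.log x < 0 := Real.log_neg hx0 hx1
    have hone : ∀ j : Fin m, ν {t : ℝ | Real.log t / p (y₀.succAbove j) < Real.log x / p y₀}
        = ENNReal.ofReal (x ^ (p (y₀.succAbove j) / p y₀)) := by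
      intro j
      set z := y₀.succAbove j with hz
      set c : ℝ := p z / p y₀ with hc
      have hc0 : 0 < c := div_pos (hp z) (hp y₀)
      have hxc0 : 0 < x ^ c := Real.rpow_pos_of_pos hx0 c
      have hxc1 : x ^ c < 1 := Real.rpow_lt_one hx0.le hx1 hc0
      have hAm : MeasurableSet {t : ℝ | Real.log t / p z < Real.log x / p y₀} :=
        measurableSet_lt (Real.measurable_log.div_const _) measurable_const
      rw [hν, Measure.restrict_apply hAm]
      have hset : {t : ℝ | Real.log t / p z < Real.log x / p y₀} ∩ Set.Icc 0 1
          = Set.Ioo 0 (x ^ c) := by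
        ext t
        simp only [Set.mem_inter_iff, Set.mem_setOf_eq, Set.mem_Icc, Set.mem_Ioo]
        constructor
        · rintro ⟨hlt, h0, h1⟩
          have ht0 : 0 < t := by
            rcases h0.lt_or_eq with h | h
            · exact h
            · exfalso
              rw [← h, Real.log_zero, zero_div] at hlt
              have := div_neg_of_neg_of_pos hlogx (hp y₀)
              linarith
          refine ⟨ht0, ?_⟩
          have h2 : Real.log t < c * Real.log x := by
            rw [hc, div_mul_eq_mul_div, lt_div_iff₀ (hp y₀), mul_comm (p z)]
            exact (div_lt_div_iff₀ (hp z) (hp y₀)).1 hlt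
          have h3 : Real.log t < Real.log (x ^ c) := by
            rw [Real.log_rpow hx0]; exact h2
          exact (Real.log_lt_log_iff ht0 hxc0).1 h3
        · rintro ⟨ht0, htc⟩
          have h1 : t ≤ 1 := (htc.trans hxc1).le
          refine ⟨?_, ht0.le, h1⟩
          have h3 : Real.log t < Real.log (x ^ c) := (Real.log_lt_log_iff ht0 hxc0).2 htc
          rw [Real.log_rpow hx0] at h3
          rw [div_lt_div_iff₀ (hp z) (hp y₀)]
          rw [hc, div_mul_eq_mul_div, lt_div_iff₀ (hp y₀), mul_comm (p z)] at h3
          exact h3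
      rw [hset, Real.volume_Ioo, sub_zero]
    calc (∏ j : Fin m, ν {t : ℝ | Real.log t / p (y₀.succAbove j) < Real.log x / p y₀})
        = ∏ j : Fin m, ENNReal.ofReal (x ^ (p (y₀.succAbove j) / p y₀)) :=
          Finset.prod_congr rfl fun j _ => hone j
      _ = ENNReal.ofReal (∏ j : Fin m, x ^ (p (y₀.succAbove j) / p y₀)) :=
          (ENNReal.ofReal_prod_of_nonneg fun j _ => Real.rpow_nonneg hx0.le _).symm
      _ = ENNReal.ofReal (x ^ a) := by
          rw [← Real.rpow_sum_of_pos hx0, ← Finset.sum_div]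
          congr 2
          have h4 := Fin.sum_univ_succAbove p y₀
          rw [hsum] at h4
          rw [ha]
          congr 1
          linarith
end

section
/- Let d, n ≥ 1 and for each position i ∈ Fin d let p_i : Fin n → ℝ be a probability vector with p_{i,x} > 0 for all x and ∑_x p_{i,x} = 1. Let (R_{i,x})_{i ∈ Fin d, x ∈ Fin n} be independent random variables, each uniformly distributed on [0,1]. Then for every target sequence (y_i)_{i ∈ Fin d}, the probability that for every position i the value ln(R_{i,y_i})/p_{i,y_i} is strictly largest among {ln(R_{i,x})/p_{i,x} : x ∈ Fin n} equals ∏_{i=1}^d p_{i,y_i}. (Per-step distortion-freeness of the watermarked diffusion sampler: the jointly sampled sequence has the model's product distribution.) -/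
open MeasureTheory ProbabilityTheory Set

namespace GumbelAux

/-- Measure of a log-threshold set under the uniform distribution on `(0,1)`. -/
lemma uniform_log_div_lt (q c : ℝ) (hq : 0 < q) (hc : c < 0) :
    volume.restrict (Set.Ioo (0:ℝ) 1) {s | Real.log s / q < c}
      = ENNReal.ofReal (Real.exp (c * q)) := by
  have hset : {s : ℝ | Real.log s / q < c} ∩ Set.Ioo 0 1
      = Set.Ioo 0 (Real.exp (c * q)) := by
    ext s
    simp only [Set.mem_inter_iff, Set.mem_setOf_eq, Set.mem_Ioo]
    constructor
    · rintro ⟨h1, h2, _⟩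
      rw [div_lt_iff₀ hq] at h1
      exact ⟨h2, (Real.log_lt_iff_lt_exp h2).mp h1⟩
    · rintro ⟨h2, h3⟩
      have hexp : Real.exp (c * q) < 1 := by
        rw [Real.exp_lt_one_iff]
        exact mul_neg_of_neg_of_pos hc hq
      exact ⟨by rw [div_lt_iff₀ hq]; exact (Real.log_lt_iff_lt_exp h2).mpr h3, h2, h3.trans hexp⟩
  rw [Measure.restrict_apply' measurableSet_Ioo, hset, Real.volume_Ioo, sub_zero]

/-- The Gumbel-max computation at a single position. -/
lemma pi_gumbel (m : ℕ) (p : Fin (m+1) → ℝ) (hp : ∀ x, 0 < p x) (hsum : ∑ x, p x = 1)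
    (y : Fin (m+1)) :
    Measure.pi (fun _ : Fin (m+1) => volume.restrict (Set.Ioo (0:ℝ) 1))
      {u | ∀ x, x ≠ y → Real.log (u x) / p x < Real.log (u y) / p y}
      = ENNReal.ofReal (p y) := by
  set μ : Measure ℝ := volume.restrict (Set.Ioo (0:ℝ) 1) with hμ
  have hpy : 0 < p y := hp y
  have hpy1 : p y ≤ 1 := by
    have h := Finset.single_le_sum (f := p) (fun x _ => (hp x).le) (Finset.mem_univ y)
    rwa [hsum] at h
  set r : ℝ := (1 - p y) / p y with hr
  have hrpos : 0 ≤ r := div_nonneg (by linarith) hpy.le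
  have hrgt : (-1:ℝ) < r := by linarith
  set B : Set (ℝ × (Fin m → ℝ)) :=
    {tv | ∀ j : Fin m, Real.log (tv.2 j) / p (y.succAbove j) < Real.log tv.1 / p y} with hB
  have hBmeas : MeasurableSet B := by
    have : B = ⋂ j : Fin m, {tv : ℝ × (Fin m → ℝ) |
        Real.log (tv.2 j) / p (y.succAbove j) < Real.log tv.1 / p y} := by
      ext tv; simp [hB, Set.mem_iInter]
    rw [this]
    refine MeasurableSet.iInter fun j => measurableSet_lt ?_ ?_
    · exact (Real.measurable_log.comp ((measurable_pi_apply j).comp measurable_snd)).div_const _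
    · exact (Real.measurable_log.comp measurable_fst).div_const _
  have hpres := measurePreserving_piFinSuccAbove (fun _ : Fin (m+1) => μ) y
  have hA : {u : Fin (m+1) → ℝ | ∀ x, x ≠ y → Real.log (u x) / p x < Real.log (u y) / p y}
      = (MeasurableEquiv.piFinSuccAbove (fun _ : Fin (m+1) => ℝ) y) ⁻¹' B := by
    ext u
    simp only [Set.mem_setOf_eq, Set.mem_preimage, hB, MeasurableEquiv.piFinSuccAbove,
      MeasurableEquiv.coe_mk, Equiv.symm_symm, Fin.insertNthEquiv, Equiv.coe_fn_symm_mk,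
      Fin.removeNth]
    constructor
    · intro h j; exact h _ (Fin.succAbove_ne y j)
    · intro h x hx
      obtain ⟨j, rfl⟩ := Fin.exists_succAbove_eq hx
      exact h j
  rw [hA, hpres.measure_preimage hBmeas.nullMeasurableSet]
  rw [Measure.prod_apply hBmeas]
  have hkey : ∀ t ∈ Set.Ioo (0:ℝ) 1,
      Measure.pi (fun _ : Fin m => μ) (Prod.mk t ⁻¹' B) = ENNReal.ofReal (t ^ r) := by
    intro t ht
    have hlt : Real.log t < 0 := Real.log_neg ht.1 ht.2
    have hc : Real.log t / p y < 0 := div_neg_of_neg_of_pos hlt hpy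
    have hsec : Prod.mk t ⁻¹' B = Set.pi Set.univ
        (fun j : Fin m => {s : ℝ | Real.log s / p (y.succAbove j) < Real.log t / p y}) := by
      ext v; simp [hB, Set.mem_pi]
    rw [hsec, Measure.pi_pi]
    have hfac : ∀ j : Fin m, μ {s : ℝ | Real.log s / p (y.succAbove j) < Real.log t / p y}
        = ENNReal.ofReal (Real.exp ((Real.log t / p y) * p (y.succAbove j))) := fun j =>
      uniform_log_div_lt _ _ (hp _) hc
    simp_rw [hfac]
    rw [← ENNReal.ofReal_prod_of_nonneg (fun j _ => (Real.exp_pos _).le), ← Real.exp_sum]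
    congr 1
    have hsum' : ∑ j : Fin m, p (y.succAbove j) = 1 - p y := by
      have := Fin.sum_univ_succAbove p y
      rw [hsum] at this
      linarith
    rw [← Finset.mul_sum, hsum', Real.rpow_def_of_pos ht.1]
    rw [hr]
    ring_nf
  calc
    ∫⁻ t, Measure.pi (fun _ : Fin m => μ) (Prod.mk t ⁻¹' B) ∂μ
        = ∫⁻ t in Set.Ioo (0:ℝ) 1, ENNReal.ofReal (t ^ r) := by
          rw [hμ]
          exact setLIntegral_congr_fun measurableSet_Ioo (fun t ht => hkey t ht)
    _ = ENNReal.ofReal (p y) := by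
          have hint : IntegrableOn (fun t : ℝ => t ^ r) (Set.Ioo 0 1) := by
            have h1 : IntervalIntegrable (fun t : ℝ => t ^ r) volume 0 1 :=
              intervalIntegral.intervalIntegrable_rpow' hrgt
            have h2 : IntegrableOn (fun t : ℝ => t ^ r) (Set.Ioc 0 1) := by
              rwa [intervalIntegrable_iff_integrableOn_Ioc_of_le zero_le_one] at h1
            exact h2.mono_set Set.Ioo_subset_Ioc_self
          rw [← ofReal_integral_eq_lintegral_ofReal hint
            (ae_restrict_of_forall_mem measurableSet_Ioo fun t ht => Real.rpow_nonneg ht.1.le r)]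
          congr 1
          rw [← integral_Ioc_eq_integral_Ioo, ← intervalIntegral.integral_of_le zero_le_one,
            integral_rpow (Or.inl hrgt), Real.one_rpow,
            Real.zero_rpow (by positivity), sub_zero]
          have hr1 : r + 1 = 1 / p y := by
            rw [hr, eq_div_iff hpy.ne', add_mul, div_mul_cancel₀ _ hpy.ne']; ring
          rw [hr1]
          field_simp

/-- Product formula for a box at a fixed block `i`. -/
lemma box_formula {Ω : Type*} [MeasureSpace Ω]
    {ι κ : Type*} [Fintype κ] (R : ι × κ → Ω → ℝ)
    (hindep : iIndepFun R ℙ)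
    (i : ι) (s : κ → Set ℝ) (hs : ∀ x, MeasurableSet (s x)) :
    ℙ (⋂ x, R (i, x) ⁻¹' s x) = ∏ x, ℙ (R (i, x) ⁻¹' s x) := by
  classical
  have h := hindep.measure_inter_preimage_eq_mul ({i} ×ˢ Finset.univ)
    (sets := fun ix => s ix.2) (fun ix _ => hs ix.2)
  have hset : (⋂ ix ∈ ({i} ×ˢ Finset.univ : Finset (ι × κ)), R ix ⁻¹' s ix.2)
      = ⋂ x, R (i, x) ⁻¹' s x := by
    ext ω
    simp only [Set.mem_iInter, Finset.mem_product, Finset.mem_singleton, Finset.mem_univ,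
      and_true]
    exact ⟨fun h x => h (i, x) rfl, fun h ix hix => by cases ix; subst hix; exact h _⟩
  rw [hset] at h
  rw [h, Finset.prod_product, Finset.prod_singleton]

/-- Independence of block events: the probability of the intersection of events, each
depending only on the variables of one block, is the product of the probabilities. -/
lemma blocks_indep {Ω : Type*} [MeasureSpace Ω] [IsProbabilityMeasure (ℙ : Measure Ω)]
    {ι κ : Type*} [Fintype ι] [Fintype κ]
    (R : ι × κ → Ω → ℝ) (hmeas : ∀ ix, Measurable (R ix))
    (hindep : iIndepFun R ℙ)
    (A : ι → Set (κ → ℝ)) (hA : ∀ i, MeasurableSet (A i)) :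
    ℙ (⋂ i, (fun ω x => R (i, x) ω) ⁻¹' A i)
      = ∏ i, ℙ ((fun ω x => R (i, x) ω) ⁻¹' A i) := by
  classical
  set F : ι → Ω → (κ → ℝ) := fun i ω x => R (i, x) ω with hF
  set π : ι → Set (Set Ω) := fun i =>
    {t | ∃ s : κ → Set ℝ, (∀ x, MeasurableSet (s x)) ∧ t = ⋂ x, R (i, x) ⁻¹' s x} with hπ
  have hpi : ∀ i, IsPiSystem (π i) := by
    intro i
    rintro _ ⟨s, hs, rfl⟩ _ ⟨s', hs', rfl⟩ _
    refine ⟨fun x => s x ∩ s' x, fun x => (hs x).inter (hs' x), ?_⟩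
    ext ω; simp only [Set.mem_inter_iff, Set.mem_iInter, Set.mem_preimage]
    aesop
  have hle : ∀ i, MeasurableSpace.generateFrom (π i) ≤ (inferInstance : MeasurableSpace Ω) := by
    intro i
    refine MeasurableSpace.generateFrom_le ?_
    rintro _ ⟨s, hs, rfl⟩
    exact MeasurableSet.iInter fun x => (hmeas (i, x)) (hs x)
  have hFm : ∀ i, Measurable[MeasurableSpace.generateFrom (π i)] (F i) := by
    intro i
    rw [measurable_iff_comap_le, ← generateFrom_pi,
      MeasurableSpace.comap_generateFrom]
    refine MeasurableSpace.generateFrom_le ?_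
    rintro _ ⟨_, ⟨s', hs', rfl⟩, rfl⟩
    apply MeasurableSpace.measurableSet_generateFrom
    refine ⟨s', fun x => hs' x (Set.mem_univ x), ?_⟩
    ext ω
    simp [hF, Set.mem_pi]
  have hsets : iIndepSets π ℙ := by
    rw [iIndepSets_iff]
    intro S f hf
    choose s hs hfs using hf
    set sets : ι × κ → Set ℝ := fun ix =>
      if h : ix.1 ∈ S then s ix.1 h ix.2 else Set.univ with hsets'
    have hmeas' : ∀ ix ∈ S ×ˢ (Finset.univ : Finset κ), MeasurableSet (sets ix) := by
      rintro ⟨i, x⟩ hix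
      rw [Finset.mem_product] at hix
      simp only [hsets', dif_pos hix.1]
      exact hs _ hix.1 x
    have h := hindep.measure_inter_preimage_eq_mul (S ×ˢ Finset.univ)
      (sets := sets) hmeas'
    have hset : (⋂ ix ∈ (S ×ˢ Finset.univ : Finset (ι × κ)), R ix ⁻¹' sets ix)
        = ⋂ i ∈ S, f i := by
      ext ω
      simp only [Set.mem_iInter, Finset.mem_product, Finset.mem_univ, and_true]
      constructor
      · intro h i hi
        rw [hfs i hi]
        simp only [Set.mem_iInter, Set.mem_preimage]
        intro x
        have := h (i, x) hi
        simpa [hsets', dif_pos hi] using this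
      · rintro h ⟨i, x⟩ hi
        have := h i hi
        rw [hfs i hi] at this
        simp only [Set.mem_iInter, Set.mem_preimage] at this
        simpa [hsets', dif_pos hi] using this x
    rw [hset] at h
    rw [h, Finset.prod_product]
    refine Finset.prod_congr rfl fun i hi => ?_
    rw [hfs i hi, box_formula R hindep i _ (hs i hi)]
    refine Finset.prod_congr rfl fun x _ => ?_
    simp [hsets', dif_pos hi]
  have hiIndep : iIndep (fun i => MeasurableSpace.generateFrom (π i)) ℙ :=
    iIndepSets.iIndep hle π hpi (fun _ => rfl) hsets
  exact hiIndep.meas_iInter (s := fun i => F i ⁻¹' A i) (fun i => hFm i (hA i))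

/-- The law of one block of uniforms is the product of uniform measures. -/
lemma marginal_map {Ω : Type*} [MeasureSpace Ω] [IsProbabilityMeasure (ℙ : Measure Ω)]
    {ι κ : Type*} [Fintype ι] [Fintype κ]
    (R : ι × κ → Ω → ℝ) (hmeas : ∀ ix, Measurable (R ix))
    (hindep : iIndepFun R ℙ)
    (hunif : ∀ ix, (ℙ : Measure Ω).map (R ix) = volume.restrict (Set.Ioo (0:ℝ) 1)) (i : ι) :
    (ℙ : Measure Ω).map (fun ω (x : κ) => R (i, x) ω)
      = Measure.pi (fun _ : κ => volume.restrict (Set.Ioo (0:ℝ) 1)) := by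
  have hprob : IsProbabilityMeasure (volume.restrict (Set.Ioo (0:ℝ) 1)) := by
    constructor
    rw [Measure.restrict_apply MeasurableSet.univ, Set.univ_inter, Real.volume_Ioo]
    simp
  have hFmeas : Measurable (fun ω (x : κ) => R (i, x) ω) :=
    measurable_pi_lambda _ fun x => hmeas (i, x)
  refine (Measure.pi_eq fun s hs => ?_).symm
  rw [Measure.map_apply hFmeas (MeasurableSet.univ_pi hs)]
  have hset : (fun ω (x : κ) => R (i, x) ω) ⁻¹' Set.pi Set.univ s
      = ⋂ x, R (i, x) ⁻¹' s x := by
    ext ω; simp [Set.mem_pi]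
  rw [hset, box_formula R hindep i s hs]
  refine Finset.prod_congr rfl fun x _ => ?_
  rw [← hunif (i, x), Measure.map_apply (hmeas (i, x)) (hs x)]

end GumbelAux

open GumbelAux in
/-- **Per-step distortion-freeness of the watermarked diffusion sampler.**
For each position `i : Fin d` let `p i` be a probability vector on `Fin n` with
positive entries, and let `R (i, x)` be independent `Unif[0,1]` random variables.
Then for every target sequence `y`, the probability that at every position `i` the
score `log (R (i, y i)) / p i (y i)` is strictly largest among all
`log (R (i, x)) / p i x` equals `∏ i, p i (y i)`. -/
theorem gumbel_max_diffusion_product_distribution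
    {Ω : Type*} [MeasureSpace Ω] [IsProbabilityMeasure (ℙ : Measure Ω)]
    {d n : ℕ} (hd : 1 ≤ d) (hn : 1 ≤ n)
    (p : Fin d → Fin n → ℝ) (hp : ∀ i x, 0 < p i x) (hsum : ∀ i, ∑ x, p i x = 1)
    (R : Fin d × Fin n → Ω → ℝ) (hmeas : ∀ ix, Measurable (R ix))
    (hindep : iIndepFun R ℙ)
    (hunif : ∀ ix, (ℙ : Measure Ω).map (R ix) = volume.restrict (Set.Icc (0:ℝ) 1))
    (y : Fin d → Fin n) :
    ℙ {ω | ∀ i : Fin d, ∀ x : Fin n, x ≠ y i →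
        Real.log (R (i, x) ω) / p i x < Real.log (R (i, y i) ω) / p i (y i)}
      = ENNReal.ofReal (∏ i, p i (y i)) := by
  classical
  have hunif' : ∀ ix, (ℙ : Measure Ω).map (R ix) = volume.restrict (Set.Ioo (0:ℝ) 1) := by
    intro ix
    rw [hunif ix, ← Measure.restrict_congr_set Ioo_ae_eq_Icc]
  obtain ⟨m, rfl⟩ : ∃ m, n = m + 1 := ⟨n - 1, (Nat.succ_pred_eq_of_pos hn).symm⟩
  set A : Fin d → Set (Fin (m+1) → ℝ) := fun i =>
    {u | ∀ x, x ≠ y i → Real.log (u x) / p i x < Real.log (u (y i)) / p i (y i)} with hA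
  have hAmeas : ∀ i, MeasurableSet (A i) := by
    intro i
    have : A i = ⋂ x, ⋂ (_ : x ≠ y i),
        {u : Fin (m+1) → ℝ | Real.log (u x) / p i x < Real.log (u (y i)) / p i (y i)} := by
      ext u; simp [hA]
    rw [this]
    refine MeasurableSet.iInter fun x => MeasurableSet.iInter fun _ => measurableSet_lt ?_ ?_
    · exact (Real.measurable_log.comp (measurable_pi_apply x)).div_const _
    · exact (Real.measurable_log.comp (measurable_pi_apply (y i))).div_const _
  have hEq : {ω | ∀ i : Fin d, ∀ x : Fin (m+1), x ≠ y i →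
      Real.log (R (i, x) ω) / p i x < Real.log (R (i, y i) ω) / p i (y i)}
      = ⋂ i, (fun ω x => R (i, x) ω) ⁻¹' A i := by
    ext ω; simp [hA, Set.mem_iInter, Set.mem_preimage]
  rw [hEq, blocks_indep R hmeas hindep A hAmeas]
  have hval : ∀ i, ℙ ((fun ω x => R (i, x) ω) ⁻¹' A i) = ENNReal.ofReal (p i (y i)) := by
    intro i
    have hFmeas : Measurable (fun ω (x : Fin (m+1)) => R (i, x) ω) :=
      measurable_pi_lambda _ fun x => hmeas (i, x)
    rw [← Measure.map_apply hFmeas (hAmeas i),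
      marginal_map R hmeas hindep hunif' i]
    exact pi_gumbel m (p i) (hp i) (hsum i) (y i)
  calc ∏ i, ℙ ((fun ω x => R (i, x) ω) ⁻¹' A i)
      = ∏ i, ENNReal.ofReal (p i (y i)) := Finset.prod_congr rfl fun i _ => hval i
    _ = ENNReal.ofReal (∏ i, p i (y i)) :=
        (ENNReal.ofReal_prod_of_nonneg fun i _ => (hp i (y i)).le).symm
end

section
/- Let m, L be positive integers and ζ > 0. For each s ∈ Fin m, let (R_{s,i})_{i=1}^L be random variables such that for each fixed s the R_{s,1}, …, R_{s,L} are independent and each uniformly distributed on [0,1], and set S_s = (1/L) ∑_{i=1}^L (−ln(1 − R_{s,i})). Then P(∃ s ∈ Fin m, S_s > 1 + ζ) ≤ m · exp(−L(ζ − ln(1+ζ))). (Theorem 2: the probability that the detector with threshold τ = 1 + ζ declares unwatermarked text watermarked, maximizing over m seed offsets, is at most m·exp(−L(ζ − ln(1+ζ))).) -/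
open MeasureTheory ProbabilityTheory
open scoped ENNReal

/-- **Theorem 2 (probability of false detection).**
For each offset `s : Fin m`, let `R s 1, …, R s L` be random variables that (for
fixed `s`) are independent and uniform on `[0,1]`, with normalized score
`S_s = (1/L) ∑ i, -log (1 - R s i)`.  Then the probability that some offset's score
exceeds the threshold `1 + ζ` is at most `m * exp (-L (ζ - log (1 + ζ)))`. -/
theorem detector_false_alarm_union_bound
    {Ω : Type*} [MeasureSpace Ω] [IsProbabilityMeasure (ℙ : Measure Ω)]
    {m L : ℕ} (hm : 0 < m) (hL : 0 < L)
    (R : Fin m → Fin L → Ω → ℝ) (hmeas : ∀ s i, Measurable (R s i))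
    (hindep : ∀ s, iIndepFun (R s) ℙ)
    (hunif : ∀ s i, (ℙ : Measure Ω).map (R s i) = volume.restrict (Set.Icc (0:ℝ) 1))
    (ζ : ℝ) (hζ : 0 < ζ) :
    ℙ {ω | ∃ s : Fin m, (1 / (L : ℝ)) * ∑ i, (-Real.log (1 - R s i ω)) > 1 + ζ}
      ≤ (m : ℝ≥0∞) * ENNReal.ofReal (Real.exp (-(L : ℝ) * (ζ - Real.log (1 + ζ)))) := by
  have h1ζ : (0:ℝ) < 1 + ζ := by linarith
  set t : ℝ := ζ / (1 + ζ) with ht_def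
  have ht0 : 0 < t := div_pos hζ h1ζ
  have ht1 : t < 1 := by rw [ht_def, div_lt_one h1ζ]; linarith
  have h1t : 1 - t = 1 / (1 + ζ) := by rw [ht_def]; field_simp; ring
  set f : ℝ → ℝ := fun x => -Real.log (1 - x) with hf_def
  have hf_meas : Measurable f :=
    ((measurable_const.sub measurable_id).log).neg
  set g : ℝ → ℝ := fun x => Real.exp (t * f x) with hg_def
  have hg_meas : Measurable g := (hf_meas.const_mul t).exp
  -- a.e. equality with rpow on Icc 0 1
  have h1null : (volume.restrict (Set.Icc (0:ℝ) 1)) {(1:ℝ)} = 0 := by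
    rw [Measure.restrict_apply (measurableSet_singleton 1)]
    exact le_antisymm (le_trans (measure_mono Set.inter_subset_left) (by simp)) zero_le
  have hae : ∀ᵐ x ∂(volume.restrict (Set.Icc (0:ℝ) 1)), g x = (1 - x) ^ (-t) := by
    filter_upwards [ae_restrict_mem measurableSet_Icc,
      measure_mono_null (s := {x : ℝ | ¬ x ≠ 1}) (fun x hx => by simpa using hx) h1null]
      with x hmem hx
    have hx1 : x < 1 := lt_of_le_of_ne hmem.2 hx
    have hpos : (0:ℝ) < 1 - x := by linarith
    rw [hg_def, hf_def, Real.rpow_def_of_pos hpos]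
    ring_nf
  -- integrability and value of the integral of g on Icc 0 1
  have hr : (-1:ℝ) < -t := by linarith
  have hInt_rpow : IntegrableOn (fun x : ℝ => (1 - x) ^ (-t)) (Set.Icc (0:ℝ) 1) := by
    rw [← intervalIntegrable_iff_integrableOn_Icc_of_le zero_le_one]
    have h := (intervalIntegral.intervalIntegrable_rpow' (a := 0) (b := 1) hr).comp_sub_left 1
    simpa using h.symm
  have hInt_g : IntegrableOn g (Set.Icc (0:ℝ) 1) :=
    hInt_rpow.congr (hae.mono fun x hx => hx.symm)
  have hint_g : ∫ x in Set.Icc (0:ℝ) 1, g x = 1 + ζ := by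
    rw [integral_congr_ae hae, MeasureTheory.integral_Icc_eq_integral_Ioc,
      ← intervalIntegral.integral_of_le (zero_le_one)]
    have h := intervalIntegral.integral_comp_sub_left (a := 0) (b := 1)
      (fun x : ℝ => x ^ (-t)) 1
    simp only [sub_zero, sub_self] at h
    rw [h, integral_rpow (Or.inl hr)]
    rw [Real.one_rpow, Real.zero_rpow (by linarith)]
    rw [ht_def]
    field_simp
    ring
  -- per-variable facts
  have hXmeas : ∀ s i, Measurable (fun ω => f (R s i ω)) := fun s i => hf_meas.comp (hmeas s i)
  have hint_exp : ∀ s i, Integrable (fun ω => Real.exp (t * f (R s i ω))) ℙ := by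
    intro s i
    have : Integrable g ((ℙ : Measure Ω).map (R s i)) := by rw [hunif s i]; exact hInt_g
    exact (integrable_map_measure hg_meas.aestronglyMeasurable (hmeas s i).aemeasurable).mp this
  have hmgf : ∀ s i, mgf (fun ω => f (R s i ω)) ℙ t = 1 + ζ := by
    intro s i
    have : mgf (fun ω => f (R s i ω)) ℙ t = ∫ x, g x ∂((ℙ : Measure Ω).map (R s i)) := by
      rw [integral_map (hmeas s i).aemeasurable hg_meas.aestronglyMeasurable]
      rfl
    rw [this, hunif s i]
    exact hint_g
  -- independence of transformed variables
  have hXindep : ∀ s, iIndepFun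
      (fun i => fun ω => f (R s i ω)) ℙ :=
    fun s => (hindep s).comp (fun _ => f) (fun _ => hf_meas)
  -- Chernoff bound for each s
  set Y : Fin m → Ω → ℝ := fun s ω => ∑ i, f (R s i ω) with hY_def
  have hbound : ∀ s : Fin m,
      ℙ {ω | (L:ℝ) * (1 + ζ) ≤ Y s ω}
        ≤ ENNReal.ofReal (Real.exp (-(L : ℝ) * (ζ - Real.log (1 + ζ)))) := by
    intro s
    have hYeq : Y s = ∑ i, (fun ω => f (R s i ω)) := by
      funext ω; simp [hY_def, Finset.sum_apply]
    have hIntY : Integrable (fun ω => Real.exp (t * (∑ i, (fun ω => f (R s i ω))) ω)) ℙ :=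
      (hXindep s).integrable_exp_mul_sum (fun i => hXmeas s i) (fun i _ => hint_exp s i)
    have hch := measure_ge_le_exp_mul_mgf (μ := ℙ) (X := Y s) ((L:ℝ) * (1 + ζ)) ht0.le
      (by rw [hYeq]; exact hIntY)
    have hmgfY : mgf (Y s) ℙ t = (1 + ζ) ^ L := by
      rw [hYeq, (hXindep s).mgf_sum (fun i => hXmeas s i)]
      simp [hmgf s]
    have hval : Real.exp (-t * ((L:ℝ) * (1 + ζ))) * mgf (Y s) ℙ t
        = Real.exp (-(L : ℝ) * (ζ - Real.log (1 + ζ))) := by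
      rw [hmgfY]
      have : ((1:ℝ) + ζ) ^ L = Real.exp ((L:ℝ) * Real.log (1 + ζ)) := by
        rw [Real.exp_nat_mul, Real.exp_log h1ζ]
      rw [this, ← Real.exp_add]
      congr 1
      rw [ht_def]
      field_simp
      ring
    calc ℙ {ω | (L:ℝ) * (1 + ζ) ≤ Y s ω}
        = ENNReal.ofReal ((ℙ {ω | (L:ℝ) * (1 + ζ) ≤ Y s ω}).toReal) := by
          rw [ENNReal.ofReal_toReal (measure_ne_top _ _)]
      _ ≤ ENNReal.ofReal (Real.exp (-(L : ℝ) * (ζ - Real.log (1 + ζ)))) := by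
          apply ENNReal.ofReal_le_ofReal
          rw [← hval]; exact hch
  -- union bound
  have hsub : {ω | ∃ s : Fin m, (1 / (L : ℝ)) * ∑ i, (-Real.log (1 - R s i ω)) > 1 + ζ}
      ⊆ ⋃ s : Fin m, {ω | (L:ℝ) * (1 + ζ) ≤ Y s ω} := by
    intro ω hω
    obtain ⟨s, hs⟩ := hω
    refine Set.mem_iUnion.mpr ⟨s, ?_⟩
    have hLpos : (0:ℝ) < L := Nat.cast_pos.mpr hL
    rw [one_div] at hs
    have h2 : (L:ℝ) * (1 + ζ) < ∑ i, (-Real.log (1 - R s i ω)) :=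
      (lt_inv_mul_iff₀ hLpos).mp hs
    simp only [Set.mem_setOf_eq, hY_def, hf_def]
    exact h2.le
  calc ℙ {ω | ∃ s : Fin m, (1 / (L : ℝ)) * ∑ i, (-Real.log (1 - R s i ω)) > 1 + ζ}
      ≤ ℙ (⋃ s : Fin m, {ω | (L:ℝ) * (1 + ζ) ≤ Y s ω}) := measure_mono hsub
    _ ≤ ∑' s : Fin m, ℙ {ω | (L:ℝ) * (1 + ζ) ≤ Y s ω} := measure_iUnion_le _
    _ ≤ ∑' _ : Fin m, ENNReal.ofReal (Real.exp (-(L : ℝ) * (ζ - Real.log (1 + ζ)))) :=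
        ENNReal.tsum_le_tsum hbound
    _ = (m : ℝ≥0∞) * ENNReal.ofReal (Real.exp (-(L : ℝ) * (ζ - Real.log (1 + ζ)))) := by
        rw [tsum_fintype]
        simp [Finset.card_univ, mul_comm]
end
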